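/- Under dual-key early-fusion detection with aggregated per-token score T_t = (1-alpha) s_t^(1) + alpha s_t^(2), where with probability 1-alpha one has E[s_t^(1)] = H_{1/p_t}, E[s_t^(2)] = 1, and with probability alpha one has E[s_t^(1)] = 1, E[s_t^(2)] = H_{1/p_t}, the expected total score satisfies E[S_T] >= T + (alpha^2 + (1-alpha)^2)(pi^2/6 - 1) H_T. -/

import Mathlib

open MeasureTheory ProbabilityTheory Real

section Aux

lemma hasSum_tele' : HasSum (fun n : ℕ => 1 / (n + 1 : ℝ) - 1 / (n + 2 : ℝ)) 1 := by
  have hnn : ∀ n : ℕ, 0 ≤ 1 / (n + 1 : ℝ) - 1 / (n + 2 : ℝ) := by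
    intro n
    have : (1:ℝ)/(n+2) ≤ 1/(n+1) := by
      apply one_div_le_one_div_of_le
      · positivity
      · linarith
    linarith
  rw [hasSum_iff_tendsto_nat_of_nonneg hnn]
  have key : ∀ n : ℕ, ∑ i ∈ Finset.range n, (1 / (i + 1 : ℝ) - 1 / (i + 2 : ℝ))
      = 1 - 1 / (n + 1 : ℝ) := by
    intro n
    have h := Finset.sum_range_sub' (fun i : ℕ => 1 / (i + 1 : ℝ)) n
    simp only [Nat.cast_zero] at h
    rw [show ∑ i ∈ Finset.range n, (1 / (i + 1 : ℝ) - 1 / (i + 2 : ℝ))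
        = ∑ i ∈ Finset.range n, (1 / (i + 1 : ℝ) - 1 / ((i + 1 : ℕ) + 1 : ℝ)) by
      apply Finset.sum_congr rfl; intro i _; push_cast; ring,
      h]
    norm_num
  simp_rw [key]
  have h := tendsto_one_div_add_atTop_nhds_zero_nat (𝕜 := ℝ)
  have : Filter.Tendsto (fun n : ℕ => 1 - 1 / (n + 1 : ℝ)) Filter.atTop (nhds (1 - 0)) :=
    Filter.Tendsto.sub tendsto_const_nhds h
  simpa using this

lemma hasSum_shift2' : HasSum (fun n : ℕ => 1 / ((n : ℝ) + 2) ^ 2) (π ^ 2 / 6 - 1) := by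
  have h : HasSum (fun n : ℕ => (1:ℝ) / ((n + 2 : ℕ):ℝ)^2) (π ^ 2 / 6 - 1) := by
    rw [hasSum_nat_add_iff (f := fun n : ℕ => (1:ℝ) / (n:ℝ)^2) 2]
    convert hasSum_zeta_two using 1
    · rfl
    rw [Finset.sum_range_succ, Finset.sum_range_one]
    norm_num
  convert h using 2 with n
  push_cast; ring_nf

lemma H_lower' (q : ℝ) (hq0 : 0 < q) (hq1 : q ≤ 1) :
    1 + (π ^ 2 / 6 - 1) * (-(q * Real.log q)) ≤
      ∑' n : ℕ, (1 / (n + 1 : ℝ) - 1 / ((n + 1 : ℝ) + 1 / q)) := by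
  set x : ℝ := 1 / q with hxdef
  have hx1 : 1 ≤ x := one_le_one_div hq0 hq1
  have hx0 : 0 < x := by linarith
  have hub : ∀ n : ℕ, 1 / (((n : ℝ) + 2) * ((n : ℝ) + 1 + x)) ≤ 1 / ((n : ℝ) + 2) ^ 2 := by
    intro n
    apply one_div_le_one_div_of_le
    · positivity
    · have : ((n:ℝ) + 2) ≤ (n:ℝ) + 1 + x := by linarith
      nlinarith [Nat.cast_nonneg (α := ℝ) n]
  have hcsum : Summable (fun n : ℕ => 1 / (((n : ℝ) + 2) * ((n : ℝ) + 1 + x))) :=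
    Summable.of_nonneg_of_le (fun n => by positivity) hub hasSum_shift2'.summable
  set C : ℝ := ∑' n : ℕ, 1 / (((n : ℝ) + 2) * ((n : ℝ) + 1 + x)) with hCdef
  have hdecomp : HasSum (fun n : ℕ => 1 / (n + 1 : ℝ) - 1 / ((n + 1 : ℝ) + x))
      (1 + (x - 1) * C) := by
    have h := hasSum_tele'.add ((hcsum.hasSum).mul_left (x - 1))
    convert h using 2 with n
    have h1 : ((n:ℝ) + 1) ≠ 0 := by positivity
    have h2 : ((n:ℝ) + 2) ≠ 0 := by positivity
    have h3 : ((n:ℝ) + 1 + x) ≠ 0 := by positivity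
    field_simp
    ring
  rw [hdecomp.tsum_eq]
  have hClb : (π ^ 2 / 6 - 1) / x ≤ C := by
    have hle : ∀ n : ℕ, (1 / x) * (1 / ((n : ℝ) + 2) ^ 2)
        ≤ 1 / (((n : ℝ) + 2) * ((n : ℝ) + 1 + x)) := by
      intro n
      rw [div_mul_div_comm, one_mul]
      apply one_div_le_one_div_of_le
      · positivity
      · have : (n:ℝ) + 1 + x ≤ x * ((n:ℝ) + 2) := by nlinarith [Nat.cast_nonneg (α := ℝ) n]
        nlinarith [Nat.cast_nonneg (α := ℝ) n]
    have := Summable.tsum_le_tsum hle ((hasSum_shift2'.summable).mul_left (1 / x)) hcsum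
    rw [tsum_mul_left, hasSum_shift2'.tsum_eq] at this
    calc (π ^ 2 / 6 - 1) / x = 1 / x * (π ^ 2 / 6 - 1) := by ring
    _ ≤ C := this
  have hlog : -(q * Real.log q) ≤ (x - 1) / x := by
    have hlq : Real.log q = -Real.log x := by
      rw [hxdef, Real.log_div one_ne_zero (ne_of_gt hq0), Real.log_one]; ring
    rw [hlq]
    have h1 : Real.log x ≤ x - 1 := Real.log_le_sub_one_of_pos hx0
    have hq : q = 1 / x := by field_simp [hxdef]; rw [hxdef]; field_simp
    rw [hq]
    have hgoal : -(1 / x * -Real.log x) = Real.log x * (1/x) := by ring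
    have hle : Real.log x * (1/x) ≤ (x-1) * (1/x) :=
      mul_le_mul_of_nonneg_right h1 (by positivity)
    calc -(1/x * -Real.log x) = Real.log x * (1/x) := hgoal
      _ ≤ (x-1) * (1/x) := hle
      _ = (x-1)/x := by ring
  have hpi : (0:ℝ) ≤ π ^ 2 / 6 - 1 := by
    nlinarith [Real.pi_gt_three]
  have key : (π ^ 2 / 6 - 1) * (-(q * Real.log q)) ≤ (x - 1) * C := by
    calc (π ^ 2 / 6 - 1) * (-(q * Real.log q)) ≤ (π ^ 2 / 6 - 1) * ((x - 1) / x) :=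
          mul_le_mul_of_nonneg_left hlog hpi
      _ = (x - 1) * ((π ^ 2 / 6 - 1) / x) := by ring
      _ ≤ (x - 1) * C := mul_le_mul_of_nonneg_left hClb (by linarith)
  linarith

lemma setInt_eq_cond' {Ω : Type*} [MeasurableSpace Ω] (μ : Measure Ω) [IsProbabilityMeasure μ]
    (A : Set Ω) (f : Ω → ℝ) :
    ∫ ω in A, f ω ∂μ = (μ A).toReal * ∫ ω, f ω ∂μ[|A] := by
  rcases eq_or_ne (μ A) 0 with h0 | h0
  · rw [h0, ENNReal.toReal_zero, zero_mul, Measure.restrict_eq_zero.mpr h0,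
      integral_zero_measure]
  · have hfin : μ A ≠ ⊤ := (measure_lt_top μ A).ne
    rw [ProbabilityTheory.cond, integral_smul_measure, ENNReal.toReal_inv, smul_eq_mul,
      ← mul_assoc, mul_inv_cancel₀ (ENNReal.toReal_ne_zero.mpr ⟨h0, hfin⟩), one_mul]

lemma total_exp' {Ω : Type*} [MeasurableSpace Ω] (μ : Measure Ω) [IsProbabilityMeasure μ]
    (A : Set Ω) (hA : MeasurableSet A) (f : Ω → ℝ) (hf : Integrable f μ)
    (α : ℝ) (hα0 : 0 ≤ α) (hα1 : α ≤ 1) (hμA : μ A = ENNReal.ofReal α) :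
    ∫ ω, f ω ∂μ = α * (∫ ω, f ω ∂μ[|A]) + (1 - α) * (∫ ω, f ω ∂μ[|Aᶜ]) := by
  have hμAc : μ Aᶜ = ENNReal.ofReal (1 - α) := by
    rw [prob_compl_eq_one_sub hA, hμA, ENNReal.ofReal_sub 1 hα0, ENNReal.ofReal_one]
  have h1 : (μ A).toReal = α := by rw [hμA, ENNReal.toReal_ofReal hα0]
  have h2 : (μ Aᶜ).toReal = 1 - α := by
    rw [hμAc, ENNReal.toReal_ofReal (by linarith)]
  rw [← integral_add_compl hA hf, setInt_eq_cond' μ A f, setInt_eq_cond' μ Aᶜ f, h1, h2]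

end Aux

/-- Dual-key early-fusion detection: the aggregated per-token score is
`T_t = (1-α) s¹_t + α s²_t`, where with probability `1-α` (key 1 used) the conditional
expectations are `E[s¹_t] = H_{1/p t}`, `E[s²_t] = 1`, and with probability `α` (key 2
used) they are `E[s¹_t] = 1`, `E[s²_t] = H_{1/p t}`. Then
`E[S_T] ≥ T + (α² + (1-α)²)(π²/6 - 1) H_T`. -/
theorem dual_key_early_fusion_bound
    {Ω : Type*} [MeasurableSpace Ω] (μ : Measure Ω) [IsProbabilityMeasure μ]
    (T : ℕ) (α : ℝ) (hα : α ∈ Set.Icc (0 : ℝ) 1)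
    (p : Fin T → ℝ) (hp : ∀ t, p t ∈ Set.Ioc (0 : ℝ) 1)
    (K : Fin T → Ω → Bool) (hKmeas : ∀ t, Measurable (K t))
    (hK : ∀ t, μ {ω | K t ω = true} = ENNReal.ofReal α)
    (s1 s2 : Fin T → Ω → ℝ)
    (hint1 : ∀ t, Integrable (s1 t) μ) (hint2 : ∀ t, Integrable (s2 t) μ)
    (hE1f : ∀ t, ∫ ω, s1 t ω ∂μ[|{ω | K t ω = false}] =
      ∑' n : ℕ, (1 / (n + 1 : ℝ) - 1 / ((n + 1 : ℝ) + 1 / p t)))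
    (hE2f : ∀ t, ∫ ω, s2 t ω ∂μ[|{ω | K t ω = false}] = 1)
    (hE1t : ∀ t, ∫ ω, s1 t ω ∂μ[|{ω | K t ω = true}] = 1)
    (hE2t : ∀ t, ∫ ω, s2 t ω ∂μ[|{ω | K t ω = true}] =
      ∑' n : ℕ, (1 / (n + 1 : ℝ) - 1 / ((n + 1 : ℝ) + 1 / p t))) :
    ∫ ω, (∑ t, ((1 - α) * s1 t ω + α * s2 t ω)) ∂μ ≥
      T + (α ^ 2 + (1 - α) ^ 2) * (π ^ 2 / 6 - 1) * (∑ t, -(p t * Real.log (p t))) := by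
  obtain ⟨hα0, hα1⟩ := hα
  set H : Fin T → ℝ := fun t => ∑' n : ℕ, (1 / (n + 1 : ℝ) - 1 / ((n + 1 : ℝ) + 1 / p t))
    with hHdef
  -- per token expectations
  have hA : ∀ t, MeasurableSet {ω | K t ω = true} :=
    fun t => (hKmeas t) (measurableSet_singleton true)
  have hcompl : ∀ t, {ω | K t ω = false} = {ω | K t ω = true}ᶜ := by
    intro t; ext ω; simp [Bool.not_eq_true]
  have hE1 : ∀ t, ∫ ω, s1 t ω ∂μ = α * 1 + (1 - α) * H t := by
    intro t
    have := total_exp' μ {ω | K t ω = true} (hA t) (s1 t) (hint1 t) α hα0 hα1 (hK t)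
    rw [this, hE1t t, ← hcompl t, hE1f t]
  have hE2 : ∀ t, ∫ ω, s2 t ω ∂μ = α * H t + (1 - α) * 1 := by
    intro t
    have := total_exp' μ {ω | K t ω = true} (hA t) (s2 t) (hint2 t) α hα0 hα1 (hK t)
    rw [this, hE2t t, ← hcompl t, hE2f t]
  -- integrability of summand
  have hintt : ∀ t : Fin T, Integrable (fun ω => (1 - α) * s1 t ω + α * s2 t ω) μ :=
    fun t => ((hint1 t).const_mul (1 - α)).add ((hint2 t).const_mul α)
  have hswap : ∫ ω, (∑ t, ((1 - α) * s1 t ω + α * s2 t ω)) ∂μ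
      = ∑ t, ((1 - α) * (α * 1 + (1 - α) * H t) + α * (α * H t + (1 - α) * 1)) := by
    rw [integral_finset_sum Finset.univ (fun t _ => hintt t)]
    apply Finset.sum_congr rfl
    intro t _
    rw [integral_add ((hint1 t).const_mul (1 - α)) ((hint2 t).const_mul α),
      integral_const_mul, integral_const_mul, hE1 t, hE2 t]
  rw [hswap, ge_iff_le]
  -- per token lower bound
  have hθ : (0:ℝ) ≤ α ^ 2 + (1 - α) ^ 2 := by positivity
  have hpi : (0:ℝ) ≤ π ^ 2 / 6 - 1 := by nlinarith [Real.pi_gt_three]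
  have hterm : ∀ t : Fin T,
      1 + (α ^ 2 + (1 - α) ^ 2) * (π ^ 2 / 6 - 1) * (-(p t * Real.log (p t)))
        ≤ (1 - α) * (α * 1 + (1 - α) * H t) + α * (α * H t + (1 - α) * 1) := by
    intro t
    obtain ⟨hp0, hp1⟩ := hp t
    have hH : 1 + (π ^ 2 / 6 - 1) * (-(p t * Real.log (p t))) ≤ H t :=
      H_lower' (p t) hp0 hp1
    nlinarith [mul_le_mul_of_nonneg_left hH hθ]
  calc (T:ℝ) + (α ^ 2 + (1 - α) ^ 2) * (π ^ 2 / 6 - 1) * (∑ t, -(p t * Real.log (p t)))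
      = ∑ t : Fin T, (1 + (α ^ 2 + (1 - α) ^ 2) * (π ^ 2 / 6 - 1)
          * (-(p t * Real.log (p t)))) := by
        rw [Finset.sum_add_distrib, Finset.sum_const, ← Finset.mul_sum]
        simp
    _ ≤ ∑ t, ((1 - α) * (α * 1 + (1 - α) * H t) + α * (α * H t + (1 - α) * 1)) :=
        Finset.sum_le_sum (fun t _ => hterm t)
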